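/- Let s' < s < 0. Then there are constants c, C > 0 depending only on s, s' such that for every real κ ≥ 1 and every tempered distribution q with finite H^s_κ norm: c ‖q‖²_{H^s_κ} ≤ ∫_κ^∞ ϰ^{2(s-s')} ‖q‖²_{H^{s'}_ϰ} (dϰ/ϰ) ≤ C ‖q‖²_{H^s_κ}. -/

import Mathlib

open MeasureTheory Filter Set

lemma lower_W (s' s : ℝ) (h1 : s' < s) (h2 : s < 0) (κ ξ : ℝ) (hκ : 1 ≤ κ) :
    ENNReal.ofReal ((5:ℝ) ^ s' / (-(2*s)) * (4*κ^2 + ξ^2) ^ s) ≤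
      ∫⁻ ϰ in Ioi κ, ENNReal.ofReal (ϰ ^ (2*(s-s') - 1) * (4*ϰ^2 + ξ^2) ^ s') := by
  have hκ0 : (0:ℝ) < κ := by linarith
  have hbase : (0:ℝ) < 4*κ^2 + ξ^2 := by positivity
  set r := Real.sqrt (4*κ^2 + ξ^2) with hrdef
  have hr0' : 0 ≤ r := Real.sqrt_nonneg _
  have hr2 : r^2 = 4*κ^2 + ξ^2 := Real.sq_sqrt hbase.le
  have hrκ : κ < r := by
    have h : κ^2 < r^2 := by rw [hr2]; nlinarith
    exact lt_of_pow_lt_pow_left₀ 2 hr0' h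
  have hr0 : 0 < r := hκ0.trans hrκ
  have hrs : r ^ (2*s) = (4*κ^2+ξ^2) ^ s := by
    rw [Real.rpow_mul hr0']
    norm_num [← hr2, Real.rpow_natCast r 2]
  have key : ∀ ϰ ∈ Ioi r, (5:ℝ)^s' * ϰ ^ (2*s - 1) ≤ ϰ ^ (2*(s-s') - 1) * (4*ϰ^2 + ξ^2) ^ s' := by
    intro ϰ hϰ
    have hϰr : r < ϰ := hϰ
    have hϰ0 : 0 < ϰ := hr0.trans hϰr
    have hle : 4*ϰ^2 + ξ^2 ≤ 5*ϰ^2 := by nlinarith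
    have h5 : (5*ϰ^2 : ℝ) ^ s' ≤ (4*ϰ^2 + ξ^2) ^ s' :=
      Real.rpow_le_rpow_of_nonpos (by positivity) hle (by linarith)
    have heq : (5*ϰ^2 : ℝ) ^ s' = 5 ^ s' * ϰ ^ (2*s') := by
      rw [Real.mul_rpow (by norm_num) (sq_nonneg ϰ)]
      congr 1
      rw [← Real.rpow_natCast ϰ 2, ← Real.rpow_mul hϰ0.le]
      norm_num
    calc (5:ℝ)^s' * ϰ ^ (2*s - 1) = ϰ ^ (2*(s-s') - 1) * (5^s' * ϰ ^ (2*s')) := by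
          rw [← mul_assoc, mul_comm (ϰ ^ (2*(s-s') - 1)) ((5:ℝ)^s'), mul_assoc,
            ← Real.rpow_add hϰ0]
          ring_nf
      _ ≤ ϰ ^ (2*(s-s') - 1) * (4*ϰ^2 + ξ^2) ^ s' := by
          rw [← heq]
          exact mul_le_mul_of_nonneg_left h5 (Real.rpow_nonneg hϰ0.le _)
  have hint : IntegrableOn (fun ϰ : ℝ => (5:ℝ)^s' * ϰ ^ (2*s - 1)) (Ioi r) :=
    (integrableOn_Ioi_rpow_of_lt (by linarith) hr0).const_mul _
  have hval : ∫ ϰ in Ioi r, (5:ℝ)^s' * ϰ ^ (2*s - 1) = (5:ℝ)^s' / (-(2*s)) * (4*κ^2 + ξ^2) ^ s := by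
    rw [integral_const_mul, integral_Ioi_rpow_of_lt (by linarith) hr0]
    have : 2*s - 1 + 1 = 2*s := by ring
    rw [this, hrs]
    ring
  calc ENNReal.ofReal ((5:ℝ) ^ s' / (-(2*s)) * (4*κ^2 + ξ^2) ^ s)
      = ∫⁻ ϰ in Ioi r, ENNReal.ofReal ((5:ℝ)^s' * ϰ ^ (2*s - 1)) := by
        rw [← hval]
        exact ofReal_integral_eq_lintegral_ofReal hint
          ((ae_restrict_iff' measurableSet_Ioi).2 (ae_of_all _ fun ϰ hϰ =>
            mul_nonneg (Real.rpow_nonneg (by norm_num) _)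
              (Real.rpow_nonneg (hr0.trans hϰ).le _)))
    _ ≤ ∫⁻ ϰ in Ioi r, ENNReal.ofReal (ϰ ^ (2*(s-s') - 1) * (4*ϰ^2 + ξ^2) ^ s') := by
        refine setLIntegral_mono (by fun_prop) fun ϰ hϰ => ENNReal.ofReal_le_ofReal (key ϰ hϰ)
    _ ≤ ∫⁻ ϰ in Ioi κ, ENNReal.ofReal (ϰ ^ (2*(s-s') - 1) * (4*ϰ^2 + ξ^2) ^ s') :=
        lintegral_mono_set (Ioi_subset_Ioi hrκ.le)

lemma upper_W (s' s : ℝ) (h1 : s' < s) (h2 : s < 0) (κ ξ : ℝ) (hκ : 1 ≤ κ) :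
    (∫⁻ ϰ in Ioi κ, ENNReal.ofReal (ϰ ^ (2*(s-s') - 1) * (4*ϰ^2 + ξ^2) ^ s')) ≤
      ENNReal.ofReal ((1/(2*(s-s')) + 1/(-(2*s))) * (4*κ^2 + ξ^2) ^ s) := by
  have hκ0 : (0:ℝ) < κ := by linarith
  have ha : 0 < 2*(s-s') := by linarith
  have hbase : (0:ℝ) < 4*κ^2 + ξ^2 := by positivity
  set r := Real.sqrt (4*κ^2 + ξ^2) with hrdef
  have hr0' : 0 ≤ r := Real.sqrt_nonneg _
  have hr2 : r^2 = 4*κ^2 + ξ^2 := Real.sq_sqrt hbase.le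
  have hrκ : κ < r := by
    have h : κ^2 < r^2 := by rw [hr2]; nlinarith
    exact lt_of_pow_lt_pow_left₀ 2 hr0' h
  have hr0 : 0 < r := hκ0.trans hrκ
  have hrs : r ^ (2*s) = (4*κ^2+ξ^2) ^ s := by
    rw [Real.rpow_mul hr0']
    norm_num [← hr2, Real.rpow_natCast r 2]
  have hrs' : (4*κ^2+ξ^2) ^ s' = r ^ (2*s') := by
    rw [Real.rpow_mul hr0']
    norm_num [← hr2, Real.rpow_natCast r 2]
  -- part B : integral over Ioi r
  have hB : (∫⁻ ϰ in Ioi r, ENNReal.ofReal (ϰ ^ (2*(s-s') - 1) * (4*ϰ^2 + ξ^2) ^ s')) ≤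
      ENNReal.ofReal (1/(-(2*s)) * (4*κ^2 + ξ^2) ^ s) := by
    have keyB : ∀ ϰ ∈ Ioi r, ϰ ^ (2*(s-s') - 1) * (4*ϰ^2 + ξ^2) ^ s' ≤ ϰ ^ (2*s - 1) := by
      intro ϰ hϰ
      have hϰ0 : 0 < ϰ := hr0.trans hϰ
      have h5 : (4*ϰ^2 + ξ^2) ^ s' ≤ (ϰ^2 : ℝ) ^ s' :=
        Real.rpow_le_rpow_of_nonpos (by positivity) (by nlinarith) (by linarith)
      have heq : (ϰ^2 : ℝ) ^ s' = ϰ ^ (2*s') := by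
        rw [← Real.rpow_natCast ϰ 2, ← Real.rpow_mul hϰ0.le]
        norm_num
      calc ϰ ^ (2*(s-s') - 1) * (4*ϰ^2 + ξ^2) ^ s'
          ≤ ϰ ^ (2*(s-s') - 1) * ϰ ^ (2*s') := by
            rw [← heq]
            exact mul_le_mul_of_nonneg_left h5 (Real.rpow_nonneg hϰ0.le _)
        _ = ϰ ^ (2*s - 1) := by rw [← Real.rpow_add hϰ0]; ring_nf
    have hint : IntegrableOn (fun ϰ : ℝ => ϰ ^ (2*s - 1)) (Ioi r) :=
      integrableOn_Ioi_rpow_of_lt (by linarith) hr0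
    have hval : ∫ ϰ in Ioi r, ϰ ^ (2*s - 1) = 1/(-(2*s)) * (4*κ^2 + ξ^2) ^ s := by
      rw [integral_Ioi_rpow_of_lt (by linarith) hr0]
      have h21 : 2*s - 1 + 1 = 2*s := by ring
      rw [h21, hrs]
      ring
    calc (∫⁻ ϰ in Ioi r, ENNReal.ofReal (ϰ ^ (2*(s-s') - 1) * (4*ϰ^2 + ξ^2) ^ s'))
        ≤ ∫⁻ ϰ in Ioi r, ENNReal.ofReal (ϰ ^ (2*s - 1)) :=
          setLIntegral_mono (by fun_prop) fun ϰ hϰ => ENNReal.ofReal_le_ofReal (keyB ϰ hϰ)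
      _ = ENNReal.ofReal (1/(-(2*s)) * (4*κ^2 + ξ^2) ^ s) := by
          rw [← hval]
          exact (ofReal_integral_eq_lintegral_ofReal hint
            ((ae_restrict_iff' measurableSet_Ioi).2 (ae_of_all _ fun ϰ hϰ =>
              Real.rpow_nonneg (hr0.trans hϰ).le _))).symm
  -- part A : integral over Ioc κ r
  have hA : (∫⁻ ϰ in Ioc κ r, ENNReal.ofReal (ϰ ^ (2*(s-s') - 1) * (4*ϰ^2 + ξ^2) ^ s')) ≤
      ENNReal.ofReal (1/(2*(s-s')) * (4*κ^2 + ξ^2) ^ s) := by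
    have keyA : ∀ ϰ ∈ Ioc κ r, ϰ ^ (2*(s-s') - 1) * (4*ϰ^2 + ξ^2) ^ s' ≤
        ϰ ^ (2*(s-s') - 1) * (4*κ^2 + ξ^2) ^ s' := by
      intro ϰ hϰ
      have hϰ0 : 0 < ϰ := hκ0.trans hϰ.1
      have h5 : (4*ϰ^2 + ξ^2) ^ s' ≤ (4*κ^2 + ξ^2) ^ s' :=
        Real.rpow_le_rpow_of_nonpos hbase (by nlinarith [hϰ.1]) (by linarith)
      exact mul_le_mul_of_nonneg_left h5 (Real.rpow_nonneg hϰ0.le _)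
    have hint : IntegrableOn (fun ϰ : ℝ => ϰ ^ (2*(s-s') - 1) * (4*κ^2 + ξ^2) ^ s') (Ioc 0 r) :=
      (intervalIntegrable_iff_integrableOn_Ioc_of_le hr0.le).1
        ((intervalIntegral.intervalIntegrable_rpow' (by linarith)).mul_const _)
    have hval : ∫ ϰ in Ioc 0 r, ϰ ^ (2*(s-s') - 1) * (4*κ^2 + ξ^2) ^ s'
        = 1/(2*(s-s')) * (4*κ^2 + ξ^2) ^ s := by
      rw [← intervalIntegral.integral_of_le hr0.le, intervalIntegral.integral_mul_const,
        integral_rpow (Or.inl (by linarith : (-1:ℝ) < 2*(s-s') - 1))]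
      have h21 : 2*(s-s') - 1 + 1 = 2*(s-s') := by ring
      rw [h21, Real.zero_rpow ha.ne', hrs']
      rw [sub_zero, div_mul_eq_mul_div, ← Real.rpow_add hr0]
      have h22 : 2*(s-s') + 2*s' = 2*s := by ring
      rw [h22, hrs]
      ring
    calc (∫⁻ ϰ in Ioc κ r, ENNReal.ofReal (ϰ ^ (2*(s-s') - 1) * (4*ϰ^2 + ξ^2) ^ s'))
        ≤ ∫⁻ ϰ in Ioc κ r, ENNReal.ofReal (ϰ ^ (2*(s-s') - 1) * (4*κ^2 + ξ^2) ^ s') :=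
          setLIntegral_mono (by fun_prop) fun ϰ hϰ => ENNReal.ofReal_le_ofReal (keyA ϰ hϰ)
      _ ≤ ∫⁻ ϰ in Ioc 0 r, ENNReal.ofReal (ϰ ^ (2*(s-s') - 1) * (4*κ^2 + ξ^2) ^ s') :=
          lintegral_mono_set (Ioc_subset_Ioc_left hκ0.le)
      _ = ENNReal.ofReal (1/(2*(s-s')) * (4*κ^2 + ξ^2) ^ s) := by
          rw [← hval]
          exact (ofReal_integral_eq_lintegral_ofReal hint
            ((ae_restrict_iff' measurableSet_Ioc).2 (ae_of_all _ fun ϰ hϰ =>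
              mul_nonneg (Real.rpow_nonneg hϰ.1.le _) (Real.rpow_nonneg hbase.le _)))).symm
  -- combine
  have hsplit : Ioi κ = Ioc κ r ∪ Ioi r := (Ioc_union_Ioi_eq_Ioi hrκ.le).symm
  rw [hsplit, lintegral_union measurableSet_Ioi Ioc_disjoint_Ioi_same]
  refine le_trans (add_le_add hA hB) (le_of_eq ?_)
  rw [← ENNReal.ofReal_add
    (mul_nonneg (one_div_nonneg.2 ha.le) (Real.rpow_nonneg hbase.le _))
    (mul_nonneg (one_div_nonneg.2 (by linarith)) (Real.rpow_nonneg hbase.le _))]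
  congr 1
  ring

set_option maxHeartbeats 1000000 in
theorem equiv_norm_integral (s' s : ℝ) (h1 : s' < s) (h2 : s < 0) :
    ∃ c C : ℝ, 0 < c ∧ 0 < C ∧ ∀ κ : ℝ, 1 ≤ κ → ∀ F : ℝ → ℂ,
      Integrable (fun ξ : ℝ => (4 * κ ^ 2 + ξ ^ 2) ^ s * ‖F ξ‖ ^ 2) →
      c * (∫ ξ : ℝ, (4 * κ ^ 2 + ξ ^ 2) ^ s * ‖F ξ‖ ^ 2) ≤
        (∫ ϰ in Set.Ioi κ,
          ϰ ^ (2 * (s - s')) * (∫ ξ : ℝ, (4 * ϰ ^ 2 + ξ ^ 2) ^ s' * ‖F ξ‖ ^ 2) / ϰ) ∧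
      (∫ ϰ in Set.Ioi κ,
          ϰ ^ (2 * (s - s')) * (∫ ξ : ℝ, (4 * ϰ ^ 2 + ξ ^ 2) ^ s' * ‖F ξ‖ ^ 2) / ϰ) ≤
        C * ∫ ξ : ℝ, (4 * κ ^ 2 + ξ ^ 2) ^ s * ‖F ξ‖ ^ 2 := by
  have hcnn : (0:ℝ) ≤ (5:ℝ)^s' / (-(2*s)) :=
    div_nonneg (Real.rpow_nonneg (by norm_num) _) (by linarith)
  have hCnn : (0:ℝ) ≤ 1/(2*(s-s')) + 1/(-(2*s)) :=
    add_nonneg (one_div_nonneg.2 (by linarith)) (one_div_nonneg.2 (by linarith))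
  refine ⟨(5:ℝ)^s' / (-(2*s)), 1/(2*(s-s')) + 1/(-(2*s)),
    div_pos (Real.rpow_pos_of_pos (by norm_num) _) (by linarith),
    add_pos (one_div_pos.2 (by linarith)) (one_div_pos.2 (by linarith)), ?_⟩
  intro κ hκ F hInt
  have hκ0 : (0:ℝ) < κ := by linarith
  have hG0 : ∀ ξ : ℝ, (0:ℝ) ≤ ‖F ξ‖ ^ 2 := fun ξ => by positivity
  -- measurability of ξ ↦ ‖F ξ‖²
  have hGm : AEStronglyMeasurable (fun ξ : ℝ => ‖F ξ‖ ^ 2) volume := by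
    have hco : Continuous fun ξ : ℝ => (4*κ^2 + ξ^2) ^ (-s) :=
      Continuous.rpow_const (by fun_prop) (fun ξ => Or.inl (by positivity))
    have heq : (fun ξ : ℝ => ‖F ξ‖ ^ 2)
        = fun ξ => (4*κ^2+ξ^2) ^ (-s) * ((4*κ^2+ξ^2) ^ s * ‖F ξ‖ ^ 2) := by
      funext ξ
      rw [← mul_assoc, ← Real.rpow_add (by positivity)]
      norm_num
    rw [heq]
    exact hco.aestronglyMeasurable.mul hInt.aestronglyMeasurable
  -- pointwise domination of kernels
  have hdom : ∀ ϰ : ℝ, κ < ϰ → ∀ ξ : ℝ, (4*ϰ^2 + ξ^2) ^ s' ≤ (4*κ^2 + ξ^2) ^ s := by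
    intro ϰ hϰ ξ
    have hϰ1 : 1 ≤ ϰ := by linarith
    have e1 : (4*ϰ^2 + ξ^2) ^ s' ≤ (4*ϰ^2 + ξ^2) ^ s :=
      Real.rpow_le_rpow_of_exponent_le (by nlinarith) h1.le
    have e2 : (4*ϰ^2 + ξ^2) ^ s ≤ (4*κ^2 + ξ^2) ^ s :=
      Real.rpow_le_rpow_of_nonpos (by positivity) (by nlinarith) h2.le
    linarith
  -- measurability of the inner integrand, for each ϰ
  have hketa : ∀ ϰ : ℝ, AEStronglyMeasurable (fun ξ : ℝ => (4*ϰ^2 + ξ^2) ^ s' * ‖F ξ‖ ^ 2)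
      volume := by
    intro ϰ
    refine AEStronglyMeasurable.mul ?_ hGm
    exact (Measurable.pow (by fun_prop) measurable_const).aestronglyMeasurable
  -- inner integrability
  have hIint : ∀ ϰ : ℝ, κ < ϰ → Integrable (fun ξ : ℝ => (4*ϰ^2 + ξ^2) ^ s' * ‖F ξ‖ ^ 2) := by
    intro ϰ hϰ
    refine hInt.mono (hketa ϰ) (ae_of_all _ fun ξ => ?_)
    rw [Real.norm_of_nonneg (mul_nonneg (Real.rpow_nonneg (by positivity) _) (hG0 ξ)),
        Real.norm_of_nonneg (mul_nonneg (Real.rpow_nonneg (by positivity) _) (hG0 ξ))]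
    exact mul_le_mul_of_nonneg_right (hdom ϰ hϰ ξ) (hG0 ξ)
  have hX0 : 0 ≤ ∫ ξ : ℝ, (4*κ^2 + ξ^2) ^ s * ‖F ξ‖ ^ 2 :=
    integral_nonneg fun ξ => mul_nonneg (Real.rpow_nonneg (by positivity) _) (hG0 ξ)
  have hT : ENNReal.ofReal (∫ ξ : ℝ, (4*κ^2 + ξ^2) ^ s * ‖F ξ‖ ^ 2)
      = ∫⁻ ξ : ℝ, ENNReal.ofReal ((4*κ^2 + ξ^2) ^ s * ‖F ξ‖ ^ 2) :=
    ofReal_integral_eq_lintegral_ofReal hInt (ae_of_all _ fun ξ =>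
      mul_nonneg (Real.rpow_nonneg (by positivity) _) (hG0 ξ))
  have hLeq : ∀ ϰ : ℝ, κ < ϰ → ENNReal.ofReal (∫ ξ : ℝ, (4*ϰ^2 + ξ^2) ^ s' * ‖F ξ‖ ^ 2)
      = ∫⁻ ξ : ℝ, ENNReal.ofReal ((4*ϰ^2 + ξ^2) ^ s' * ‖F ξ‖ ^ 2) :=
    fun ϰ hϰ => ofReal_integral_eq_lintegral_ofReal (hIint ϰ hϰ) (ae_of_all _ fun ξ =>
      mul_nonneg (Real.rpow_nonneg (by positivity) _) (hG0 ξ))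
  -- outer measurability
  have hker : AEStronglyMeasurable (fun p : ℝ × ℝ => (4*p.1^2 + p.2^2) ^ s' * ‖F p.2‖ ^ 2)
      ((volume.restrict (Set.Ioi κ)).prod volume) := by
    refine AEStronglyMeasurable.mul ?_ (hGm.comp_quasiMeasurePreserving
      Measure.quasiMeasurePreserving_snd)
    exact (Measurable.pow (by fun_prop) measurable_const).aestronglyMeasurable
  have hI_meas : AEStronglyMeasurable
      (fun ϰ : ℝ => ∫ ξ : ℝ, (4*ϰ^2 + ξ^2) ^ s' * ‖F ξ‖ ^ 2)
      (volume.restrict (Set.Ioi κ)) := hker.integral_prod_right'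
  have houter : AEStronglyMeasurable
      (fun ϰ : ℝ => ϰ ^ (2*(s-s')) * (∫ ξ : ℝ, (4*ϰ^2 + ξ^2) ^ s' * ‖F ξ‖ ^ 2) / ϰ)
      (volume.restrict (Set.Ioi κ)) := by
    have hm : AEMeasurable (fun ϰ : ℝ => ϰ ^ (2*(s-s'))
        * (∫ ξ : ℝ, (4*ϰ^2 + ξ^2) ^ s' * ‖F ξ‖ ^ 2)) (volume.restrict (Set.Ioi κ)) :=
      (((by fun_prop : Measurable fun ϰ : ℝ => ϰ ^ (2*(s-s'))).aestronglyMeasurable).mul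
        hI_meas).aemeasurable
    exact (hm.div aemeasurable_id).aestronglyMeasurable
  -- the outer integral as a lintegral
  have hJ : (∫ ϰ in Set.Ioi κ, ϰ ^ (2*(s-s')) * (∫ ξ : ℝ, (4*ϰ^2 + ξ^2) ^ s' * ‖F ξ‖ ^ 2) / ϰ)
      = (∫⁻ ϰ in Set.Ioi κ, ENNReal.ofReal
          (ϰ ^ (2*(s-s')) * (∫ ξ : ℝ, (4*ϰ^2 + ξ^2) ^ s' * ‖F ξ‖ ^ 2) / ϰ)).toReal := by
    refine integral_eq_lintegral_of_nonneg_ae ?_ houter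
    refine (ae_restrict_iff' measurableSet_Ioi).2 (ae_of_all _ fun ϰ hϰ => ?_)
    have hϰ0 : 0 < ϰ := hκ0.trans hϰ
    have hI0 : 0 ≤ ∫ ξ : ℝ, (4*ϰ^2 + ξ^2) ^ s' * ‖F ξ‖ ^ 2 :=
      integral_nonneg fun ξ => mul_nonneg (Real.rpow_nonneg (by positivity) _) (hG0 ξ)
    exact div_nonneg (mul_nonneg (Real.rpow_nonneg hϰ0.le _) hI0) hϰ0.le
  set Λ := ∫⁻ ϰ in Set.Ioi κ, ENNReal.ofReal
      (ϰ ^ (2*(s-s')) * (∫ ξ : ℝ, (4*ϰ^2 + ξ^2) ^ s' * ‖F ξ‖ ^ 2) / ϰ) with hΛdef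
  -- Tonelli
  have hΛ : Λ = ∫⁻ ξ : ℝ, (∫⁻ ϰ in Set.Ioi κ,
      ENNReal.ofReal (ϰ ^ (2*(s-s') - 1) * (4*ϰ^2 + ξ^2) ^ s')) * ENNReal.ofReal (‖F ξ‖ ^ 2) := by
    have hfm : AEMeasurable (Function.uncurry fun (ϰ ξ : ℝ) =>
        ENNReal.ofReal (ϰ ^ (2*(s-s') - 1) * (4*ϰ^2 + ξ^2) ^ s') * ENNReal.ofReal (‖F ξ‖ ^ 2))
        ((volume.restrict (Set.Ioi κ)).prod volume) := by
      refine AEMeasurable.mul ?_ ((hGm.aemeasurable.comp_quasiMeasurePreserving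
        Measure.quasiMeasurePreserving_snd).ennreal_ofReal)
      refine Measurable.aemeasurable (Measurable.ennreal_ofReal ?_)
      exact (Measurable.pow measurable_fst measurable_const).mul
        (Measurable.pow (by fun_prop) measurable_const)
    calc Λ = ∫⁻ ϰ in Set.Ioi κ, ∫⁻ ξ : ℝ,
          ENNReal.ofReal (ϰ ^ (2*(s-s') - 1) * (4*ϰ^2 + ξ^2) ^ s')
            * ENNReal.ofReal (‖F ξ‖ ^ 2) := by
          refine setLIntegral_congr_fun measurableSet_Ioi (fun ϰ hϰ => ?_)
          have hϰ0 : 0 < ϰ := hκ0.trans hϰ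
          have e1 : ϰ ^ (2*(s-s')) * (∫ ξ : ℝ, (4*ϰ^2 + ξ^2) ^ s' * ‖F ξ‖ ^ 2) / ϰ
              = ϰ ^ (2*(s-s') - 1) * ∫ ξ : ℝ, (4*ϰ^2 + ξ^2) ^ s' * ‖F ξ‖ ^ 2 := by
            rw [Real.rpow_sub hϰ0, Real.rpow_one]
            ring
          rw [e1, ENNReal.ofReal_mul (Real.rpow_nonneg hϰ0.le _), hLeq ϰ hϰ,
            ← lintegral_const_mul'' _ ((hketa ϰ).aemeasurable.ennreal_ofReal)]
          refine lintegral_congr fun ξ => ?_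
          rw [← ENNReal.ofReal_mul (Real.rpow_nonneg hϰ0.le _), ← mul_assoc,
            ENNReal.ofReal_mul (mul_nonneg (Real.rpow_nonneg hϰ0.le _)
              (Real.rpow_nonneg (by positivity) _))]
      _ = ∫⁻ ξ : ℝ, ∫⁻ ϰ in Set.Ioi κ,
          ENNReal.ofReal (ϰ ^ (2*(s-s') - 1) * (4*ϰ^2 + ξ^2) ^ s')
            * ENNReal.ofReal (‖F ξ‖ ^ 2) := lintegral_lintegral_swap hfm
      _ = _ := lintegral_congr fun ξ => lintegral_mul_const' _ _ ENNReal.ofReal_ne_top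
  -- upper bound
  have hupp : Λ ≤ ENNReal.ofReal ((1/(2*(s-s')) + 1/(-(2*s)))
      * ∫ ξ : ℝ, (4*κ^2 + ξ^2) ^ s * ‖F ξ‖ ^ 2) := by
    rw [hΛ]
    calc (∫⁻ ξ : ℝ, (∫⁻ ϰ in Set.Ioi κ,
          ENNReal.ofReal (ϰ ^ (2*(s-s') - 1) * (4*ϰ^2 + ξ^2) ^ s'))
            * ENNReal.ofReal (‖F ξ‖ ^ 2))
        ≤ ∫⁻ ξ : ℝ, ENNReal.ofReal ((1/(2*(s-s')) + 1/(-(2*s))) * (4*κ^2 + ξ^2) ^ s)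
            * ENNReal.ofReal (‖F ξ‖ ^ 2) :=
          lintegral_mono fun ξ => mul_le_mul_left (upper_W s' s h1 h2 κ ξ hκ) _
      _ = ∫⁻ ξ : ℝ, ENNReal.ofReal (1/(2*(s-s')) + 1/(-(2*s)))
            * ENNReal.ofReal ((4*κ^2 + ξ^2) ^ s * ‖F ξ‖ ^ 2) := by
          refine lintegral_congr fun ξ => ?_
          rw [ENNReal.ofReal_mul hCnn, mul_assoc,
            ← ENNReal.ofReal_mul (Real.rpow_nonneg (by positivity) _)]
      _ = ENNReal.ofReal (1/(2*(s-s')) + 1/(-(2*s)))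
            * ∫⁻ ξ : ℝ, ENNReal.ofReal ((4*κ^2 + ξ^2) ^ s * ‖F ξ‖ ^ 2) :=
          lintegral_const_mul' _ _ ENNReal.ofReal_ne_top
      _ = ENNReal.ofReal ((1/(2*(s-s')) + 1/(-(2*s)))
            * ∫ ξ : ℝ, (4*κ^2 + ξ^2) ^ s * ‖F ξ‖ ^ 2) := by
          rw [← hT, ← ENNReal.ofReal_mul hCnn]
  -- lower bound
  have hlow : ENNReal.ofReal ((5:ℝ)^s' / (-(2*s))
      * ∫ ξ : ℝ, (4*κ^2 + ξ^2) ^ s * ‖F ξ‖ ^ 2) ≤ Λ := by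
    rw [hΛ]
    calc ENNReal.ofReal ((5:ℝ)^s' / (-(2*s)) * ∫ ξ : ℝ, (4*κ^2 + ξ^2) ^ s * ‖F ξ‖ ^ 2)
        = ENNReal.ofReal ((5:ℝ)^s' / (-(2*s)))
            * ∫⁻ ξ : ℝ, ENNReal.ofReal ((4*κ^2 + ξ^2) ^ s * ‖F ξ‖ ^ 2) := by
          rw [← hT, ← ENNReal.ofReal_mul hcnn]
      _ = ∫⁻ ξ : ℝ, ENNReal.ofReal ((5:ℝ)^s' / (-(2*s)))
            * ENNReal.ofReal ((4*κ^2 + ξ^2) ^ s * ‖F ξ‖ ^ 2) :=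
          (lintegral_const_mul' _ _ ENNReal.ofReal_ne_top).symm
      _ = ∫⁻ ξ : ℝ, ENNReal.ofReal ((5:ℝ)^s' / (-(2*s)) * (4*κ^2 + ξ^2) ^ s)
            * ENNReal.ofReal (‖F ξ‖ ^ 2) := by
          refine lintegral_congr fun ξ => ?_
          rw [ENNReal.ofReal_mul hcnn, mul_assoc,
            ← ENNReal.ofReal_mul (Real.rpow_nonneg (by positivity) _)]
      _ ≤ _ := lintegral_mono fun ξ => mul_le_mul_left (lower_W s' s h1 h2 κ ξ hκ) _
  have hfin : Λ ≠ ⊤ := (lt_of_le_of_lt hupp ENNReal.ofReal_lt_top).ne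
  constructor
  · rw [show (4 * κ ^ 2 : ℝ) = 4 * κ ^ 2 from rfl, hJ]
    calc (5:ℝ)^s' / (-(2*s)) * ∫ ξ : ℝ, (4*κ^2 + ξ^2) ^ s * ‖F ξ‖ ^ 2
        = (ENNReal.ofReal ((5:ℝ)^s' / (-(2*s))
            * ∫ ξ : ℝ, (4*κ^2 + ξ^2) ^ s * ‖F ξ‖ ^ 2)).toReal :=
          (ENNReal.toReal_ofReal (mul_nonneg hcnn hX0)).symm
      _ ≤ Λ.toReal := ENNReal.toReal_mono hfin hlow
  · rw [hJ]
    calc Λ.toReal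
        ≤ (ENNReal.ofReal ((1/(2*(s-s')) + 1/(-(2*s)))
            * ∫ ξ : ℝ, (4*κ^2 + ξ^2) ^ s * ‖F ξ‖ ^ 2)).toReal :=
          ENNReal.toReal_mono ENNReal.ofReal_ne_top hupp
      _ ≤ _ := by rw [ENNReal.toReal_ofReal (mul_nonneg hCnn hX0)]
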